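/- Let R be a ring with unit and A a (not necessarily unital) associative ring. Let σ: R → M_A be a map with σ(0) = 0 and σ(1) = 1 (the identity bimultiplication), such that σ(x) and σ(y) are permutable for all x, y ∈ R, and let f, g: R × R → A be maps with f(x,0) = f(0,x) = 0, g(x,0) = g(0,x) = 0, g(x,1) = g(1,x) = 0, satisfying σ(x+y) − σ(x) − σ(y) = μ_{f(x,y)} and σ(xy) − σ(x)σ(y) = μ_{g(x,y)} in M_A for all x, y ∈ R. Then the obstruction (ζ, η, α, λ, ρ) of (σ, f, g) takes values in the bicenter C_A, satisfies η(x,x) = 0 for all x ∈ R, and, with respect to the R-bimodule structure on C_A given by x·c = σ(x)c and c·x = cσ(x), satisfies all the relations (R1)–(R17); that is, the obstruction is a family of natural equivalences of an Ann-category of type (R, C_A). -/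

import Mathlib

/-- A bimultiplication of a (not necessarily unital) associative ring `A`:
a pair of maps `a ↦ σa` (`left`) and `a ↦ aσ` (`right`) satisfying
`σ(a+b) = σa + σb`, `(a+b)σ = aσ + bσ`, `σ(ab) = (σa)b`, `(ab)σ = a(bσ)`
and `a(σb) = (aσ)b`. -/
structure Bimul (A : Type*) [NonUnitalRing A] where
  left : A → A
  right : A → A
  left_add : ∀ a b : A, left (a + b) = left a + left b
  right_add : ∀ a b : A, right (a + b) = right a + right b
  left_mul : ∀ a b : A, left (a * b) = left a * b
  right_mul : ∀ a b : A, right (a * b) = a * right b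
  middle : ∀ a b : A, a * left b = right a * b

namespace Bimul

variable {A : Type*} [NonUnitalRing A]

/-- The sum of two bimultiplications: `(σ+ν)a = σa + νa`, `a(σ+ν) = aσ + aν`. -/
instance : Add (Bimul A) :=
  ⟨fun σ ν =>
    { left := fun a => σ.left a + ν.left a
      right := fun a => σ.right a + ν.right a
      left_add := fun a b => by rw [σ.left_add, ν.left_add]; abel
      right_add := fun a b => by rw [σ.right_add, ν.right_add]; abel
      left_mul := fun a b => by rw [σ.left_mul, ν.left_mul, add_mul]
      right_mul := fun a b => by rw [σ.right_mul, ν.right_mul, mul_add]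
      middle := fun a b => by rw [mul_add, add_mul, σ.middle, ν.middle] }⟩

/-- The product of two bimultiplications: `(σν)a = σ(νa)`, `a(σν) = (aσ)ν`. -/
instance : Mul (Bimul A) :=
  ⟨fun σ ν =>
    { left := fun a => σ.left (ν.left a)
      right := fun a => ν.right (σ.right a)
      left_add := fun a b => by rw [ν.left_add, σ.left_add]
      right_add := fun a b => by rw [σ.right_add, ν.right_add]
      left_mul := fun a b => by rw [ν.left_mul, σ.left_mul]
      right_mul := fun a b => by rw [σ.right_mul, ν.right_mul]
      middle := fun a b => by rw [σ.middle, ν.middle] }⟩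

/-- The zero bimultiplication. -/
instance : Zero (Bimul A) :=
  ⟨{ left := fun _ => 0
     right := fun _ => 0
     left_add := fun _ _ => by simp
     right_add := fun _ _ => by simp
     left_mul := fun _ _ => by simp
     right_mul := fun _ _ => by simp
     middle := fun _ _ => by simp }⟩

/-- The negative of a bimultiplication. -/
instance : Neg (Bimul A) :=
  ⟨fun σ =>
    { left := fun a => -σ.left a
      right := fun a => -σ.right a
      left_add := fun a b => by rw [σ.left_add]; abel
      right_add := fun a b => by rw [σ.right_add]; abel
      left_mul := fun a b => by rw [σ.left_mul, neg_mul]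
      right_mul := fun a b => by rw [σ.right_mul, mul_neg]
      middle := fun a b => by rw [mul_neg, neg_mul, σ.middle] }⟩

/-- Difference of bimultiplications. -/
instance : Sub (Bimul A) := ⟨fun σ ν => σ + -ν⟩

/-- The identity bimultiplication, whose left and right actions are the identity map. -/
instance : One (Bimul A) :=
  ⟨{ left := id
     right := id
     left_add := fun _ _ => rfl
     right_add := fun _ _ => rfl
     left_mul := fun _ _ => rfl
     right_mul := fun _ _ => rfl
     middle := fun _ _ => rfl }⟩

/-- The inner bimultiplication `μ_c` determined by `c ∈ A`:
`μ_c a = ca`, `a μ_c = ac`. -/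
def inner (c : A) : Bimul A where
  left a := c * a
  right a := a * c
  left_add a b := mul_add c a b
  right_add a b := add_mul a b c
  left_mul a b := (mul_assoc c a b).symm
  right_mul a b := mul_assoc a b c
  middle a b := (mul_assoc a c b).symm

/-- Two bimultiplications `σ`, `ν` are permutable if `σ(aν) = (σa)ν` and
`ν(aσ) = (νa)σ` for all `a`. -/
def Permutable (σ ν : Bimul A) : Prop :=
  (∀ a : A, σ.left (ν.right a) = ν.right (σ.left a)) ∧
  (∀ a : A, ν.left (σ.right a) = σ.right (ν.left a))

end Bimul

/-- The bicenter of `A`: elements annihilated by multiplication on both sides. -/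
def bicenter (A : Type*) [NonUnitalRing A] : Set A :=
  {c | ∀ a : A, c * a = 0 ∧ a * c = 0}

section Obstruction

variable {R A : Type*} [Ring R] [NonUnitalRing A]

/-- `ζ(x,y,z) = f(y,z) − f(x+y,z) + f(x,y+z) − f(x,y)`. -/
def obsζ (f : R → R → A) (x y z : R) : A :=
  f y z - f (x + y) z + f x (y + z) - f x y

/-- `η(x,y) = f(x,y) − f(y,x)`. -/
def obsη (f : R → R → A) (x y : R) : A :=
  f x y - f y x

/-- `α(x,y,z) = σ(x)g(y,z) − g(xy,z) + g(x,yz) − g(x,y)σ(z)`. -/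
def obsα (σ : R → Bimul A) (g : R → R → A) (x y z : R) : A :=
  (σ x).left (g y z) - g (x * y) z + g x (y * z) - (σ z).right (g x y)

/-- `λ(x,y,z) = σ(x)f(y,z) − f(xy,xz) + g(x,y+z) − g(x,y) − g(x,z)`. -/
def obsl (σ : R → Bimul A) (f g : R → R → A) (x y z : R) : A :=
  (σ x).left (f y z) - f (x * y) (x * z) + g x (y + z) - g x y - g x z

/-- `ρ(x,y,z) = f(x,y)σ(z) − f(xz,yz) + g(x+y,z) − g(x,z) − g(y,z)`. -/
def obsρ (σ : R → Bimul A) (f g : R → R → A) (x y z : R) : A :=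
  (σ z).right (f x y) - f (x * z) (y * z) + g (x + y) z - g x z - g y z

end Obstruction

/-- The relations (R1)–(R17) satisfied by the family of natural equivalences
`(ξ, η, α, λ, ρ)` of an Ann-category of type `(R, M)`, stated relative to a
left action `hL : R → M → M`, `(x, m) ↦ x·m` and a right action
`hR : M → R → M`, `(m, x) ↦ m·x`. -/
def AnnRelations {R M : Type*} [Ring R] [AddCommGroup M]
    (hL : R → M → M) (hR : M → R → M)
    (ξ : R → R → R → M) (η : R → R → M) (α lam ρ : R → R → R → M) : Prop :=
  -- (R1)
  (∀ x y z t : R,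
    ξ y z t - ξ (x + y) z t + ξ x (y + z) t - ξ x y (z + t) + ξ x y z = 0) ∧
  -- (R2)
  (∀ x y z t : R, ξ 0 y z = 0 ∧ ξ x 0 t = 0 ∧ ξ x y 0 = 0) ∧
  -- (R3)
  (∀ x y z : R,
    ξ x y z - ξ x z y + ξ z x y - η x z + η (x + y) z - η y z = 0) ∧
  -- (R4)
  (∀ x y : R, η x y + η y x = 0) ∧
  -- (R5)
  (∀ x y z : R, hL x (η y z) - η (x * y) (x * z) = lam x y z - lam x z y) ∧
  -- (R6)
  (∀ x y z : R, hR (η x y) z - η (x * z) (y * z) = ρ x y z - ρ y x z) ∧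
  -- (R7)
  (∀ x y z t : R,
    hL x (ξ y z t) - ξ (x * y) (x * z) (x * t) =
      lam x z t - lam x (y + z) t + lam x y (z + t) - lam x y z) ∧
  -- (R8)
  (∀ x y z t : R,
    hR (ξ x y z) t - ξ (x * t) (y * t) (z * t) =
      ρ y z t - ρ (x + y) z t + ρ x (y + z) t - ρ x y t) ∧
  -- (R9)
  (∀ x y z t : R,
    ρ x y (z + t) - ρ x y z - ρ x y t + lam x z t + lam y z t - lam (x + y) z t =
      -ξ (x * z + x * t) (y * z) (y * t) + ξ (x * z) (x * t) (y * z) -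
        η (x * t) (y * z) + ξ (x * z + y * z) (x * t) (y * t) -
        ξ (x * z) (y * z) (x * t)) ∧
  -- (R10)
  (∀ x y z t : R,
    α x y (z + t) - α x y z - α x y t =
      hL x (lam y z t) + lam x (y * z) (y * t) - lam (x * y) z t) ∧
  -- (R11)
  (∀ x y z t : R,
    α x (y + z) t - α x y t - α x z t =
      hL x (ρ y z t) - ρ (x * y) (x * z) t + lam x (y * t) (z * t) -
        hR (lam x y z) t) ∧
  -- (R12)
  (∀ x y z t : R,
    α (x + y) z t - α x z t - α y z t =
      -hR (ρ x y z) t - ρ (x * z) (y * z) t + ρ x y (z * t)) ∧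
  -- (R13)
  (∀ x y z t : R,
    hL x (α y z t) - α (x * y) z t + α x (y * z) t - α x y (z * t) +
      hR (α x y z) t = 0) ∧
  -- (R14)
  (∀ x y z : R, α 1 y z = 0 ∧ α x 1 z = 0 ∧ α x y 1 = 0) ∧
  -- (R15)
  (∀ x y z t : R, α 0 y z = 0 ∧ α x 0 t = 0 ∧ α x y 0 = 0) ∧
  -- (R16)
  (∀ x y z : R, lam 1 y z = 0 ∧ lam 0 y z = 0 ∧ lam x 0 z = 0 ∧ lam x y 0 = 0) ∧
  -- (R17)
  (∀ x y z : R, ρ x y 1 = 0 ∧ ρ 0 y z = 0 ∧ ρ x 0 z = 0 ∧ ρ x y 0 = 0)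


set_option linter.unusedSectionVars false

namespace ObsAux

variable {R A : Type*} [Ring R] [NonUnitalRing A]

/-- `σ.left` as an additive monoid hom. -/
def lH (σ : Bimul A) : A →+ A := AddMonoidHom.mk' σ.left σ.left_add

def rH (σ : Bimul A) : A →+ A := AddMonoidHom.mk' σ.right σ.right_add

@[simp] theorem lH_apply (σ : Bimul A) (a : A) : lH σ a = σ.left a := rfl
@[simp] theorem rH_apply (σ : Bimul A) (a : A) : rH σ a = σ.right a := rfl

theorem left_zero (σ : Bimul A) : σ.left 0 = 0 := map_zero (lH σ)
theorem right_zero (σ : Bimul A) : σ.right 0 = 0 := map_zero (rH σ)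
theorem left_neg (σ : Bimul A) (a : A) : σ.left (-a) = -σ.left a := map_neg (lH σ) a
theorem right_neg (σ : Bimul A) (a : A) : σ.right (-a) = -σ.right a := map_neg (rH σ) a
theorem left_sub (σ : Bimul A) (a b : A) : σ.left (a - b) = σ.left a - σ.left b := map_sub (lH σ) a b
theorem right_sub (σ : Bimul A) (a b : A) : σ.right (a - b) = σ.right a - σ.right b := map_sub (rH σ) a b

section Pointwise

variable (σ : R → Bimul A) (f g : R → R → A)

/-- pointwise consequence of hadd, left part -/
theorem la (hadd : ∀ x y : R, σ (x + y) - σ x - σ y = Bimul.inner (f x y))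
    (x y : R) (a : A) :
    (σ (x + y)).left a = (σ x).left a + (σ y).left a + f x y * a := by
  have h := congrArg (fun τ : Bimul A => τ.left a) (hadd x y)
  change (σ (x+y)).left a + -((σ x).left a) + -((σ y).left a) = f x y * a at h
  rw [← h]; abel

theorem ra (hadd : ∀ x y : R, σ (x + y) - σ x - σ y = Bimul.inner (f x y))
    (x y : R) (a : A) :
    (σ (x + y)).right a = (σ x).right a + (σ y).right a + a * f x y := by
  have h := congrArg (fun τ : Bimul A => τ.right a) (hadd x y)
  change (σ (x+y)).right a + -((σ x).right a) + -((σ y).right a) = a * f x y at h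
  rw [← h]; abel

theorem lm (hmul : ∀ x y : R, σ (x * y) - σ x * σ y = Bimul.inner (g x y))
    (x y : R) (a : A) :
    (σ (x * y)).left a = (σ x).left ((σ y).left a) + g x y * a := by
  have h := congrArg (fun τ : Bimul A => τ.left a) (hmul x y)
  change (σ (x*y)).left a + -((σ x).left ((σ y).left a)) = g x y * a at h
  rw [← h]; abel

theorem rm (hmul : ∀ x y : R, σ (x * y) - σ x * σ y = Bimul.inner (g x y))
    (x y : R) (a : A) :
    (σ (x * y)).right a = (σ y).right ((σ x).right a) + a * g x y := by
  have h := congrArg (fun τ : Bimul A => τ.right a) (hmul x y)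
  change (σ (x*y)).right a + -((σ y).right ((σ x).right a)) = a * g x y at h
  rw [← h]; abel


/-- product elimination lemmas -/
theorem fL (hadd : ∀ x y : R, σ (x + y) - σ x - σ y = Bimul.inner (f x y))
    (x y : R) (a : A) :
    f x y * a = (σ (x + y)).left a - (σ x).left a - (σ y).left a := by
  rw [la σ f hadd]; abel

theorem fR (hadd : ∀ x y : R, σ (x + y) - σ x - σ y = Bimul.inner (f x y))
    (x y : R) (a : A) :
    a * f x y = (σ (x + y)).right a - (σ x).right a - (σ y).right a := by
  rw [ra σ f hadd]; abel

theorem gL (hmul : ∀ x y : R, σ (x * y) - σ x * σ y = Bimul.inner (g x y))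
    (x y : R) (a : A) :
    g x y * a = (σ (x * y)).left a - (σ x).left ((σ y).left a) := by
  rw [lm σ g hmul]; abel

theorem gR (hmul : ∀ x y : R, σ (x * y) - σ x * σ y = Bimul.inner (g x y))
    (x y : R) (a : A) :
    a * g x y = (σ (x * y)).right a - (σ y).right ((σ x).right a) := by
  rw [rm σ g hmul]; abel

section Bicenter

variable (hadd : ∀ x y : R, σ (x + y) - σ x - σ y = Bimul.inner (f x y))
variable (hmul : ∀ x y : R, σ (x * y) - σ x * σ y = Bimul.inner (g x y))

include hadd in
theorem zeta_mem (x y z : R) : obsζ f x y z ∈ bicenter A := by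
  intro a
  constructor
  · simp only [obsζ, sub_mul, add_mul, fL σ f hadd]
    rw [add_assoc x y z]
    abel
  · simp only [obsζ, mul_sub, mul_add, fR σ f hadd]
    rw [add_assoc x y z]
    abel

include hadd in
theorem eta_mem (x y : R) : obsη f x y ∈ bicenter A := by
  intro a
  constructor
  · simp only [obsη, sub_mul, fL σ f hadd]
    rw [add_comm x y]
    abel
  · simp only [obsη, mul_sub, fR σ f hadd]
    rw [add_comm x y]
    abel

include hmul in
theorem alpha_mem (x y z : R) : obsα σ g x y z ∈ bicenter A := by
  intro a
  constructor
  · simp only [obsα, sub_mul, add_mul, ← Bimul.left_mul, ← Bimul.middle,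
      gL σ g hmul, left_sub]
    rw [mul_assoc x y z]
    abel
  · simp only [obsα, mul_sub, mul_add, ← Bimul.right_mul, Bimul.middle,
      gR σ g hmul, right_sub]
    rw [mul_assoc x y z]
    abel

include hadd hmul in
theorem lam_mem (x y z : R) : obsl σ f g x y z ∈ bicenter A := by
  intro a
  constructor
  · simp only [obsl, sub_mul, add_mul, ← Bimul.left_mul, ← Bimul.middle,
      fL σ f hadd, gL σ g hmul, left_sub, Bimul.left_add, mul_add]
    abel
  · simp only [obsl, mul_sub, mul_add, ← Bimul.right_mul, Bimul.middle,
      fR σ f hadd, gR σ g hmul, right_sub, Bimul.right_add, add_mul]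
    abel

include hadd hmul in
theorem rho_mem (x y z : R) : obsρ σ f g x y z ∈ bicenter A := by
  intro a
  constructor
  · simp only [obsρ, sub_mul, add_mul, ← Bimul.left_mul, ← Bimul.middle,
      fL σ f hadd, gL σ g hmul, left_sub, Bimul.left_add, mul_add]
    abel
  · simp only [obsρ, mul_sub, mul_add, ← Bimul.right_mul, Bimul.middle,
      fR σ f hadd, gR σ g hmul, right_sub, Bimul.right_add, add_mul]
    abel

end Bicenter

section Rel

variable (hzero : σ 0 = 0) (hone : σ 1 = 1)
variable (hperm : ∀ x y : R, Bimul.Permutable (σ x) (σ y))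
variable (hf0l : ∀ x : R, f x 0 = 0) (hf0r : ∀ x : R, f 0 x = 0)
variable (hg0l : ∀ x : R, g x 0 = 0) (hg0r : ∀ x : R, g 0 x = 0)
variable (hg1l : ∀ x : R, g x 1 = 0) (hg1r : ∀ x : R, g 1 x = 0)
variable (hadd : ∀ x y : R, σ (x + y) - σ x - σ y = Bimul.inner (f x y))
variable (hmul : ∀ x y : R, σ (x * y) - σ x * σ y = Bimul.inner (g x y))

include hzero in
theorem lz (a : A) : (σ 0).left a = 0 := by rw [hzero]; rfl
include hzero in
theorem rz (a : A) : (σ 0).right a = 0 := by rw [hzero]; rfl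
include hone in
theorem l1 (a : A) : (σ 1).left a = a := by rw [hone]; rfl
include hone in
theorem r1 (a : A) : (σ 1).right a = a := by rw [hone]; rfl

include hperm in
theorem pl (x y : R) (a : A) :
    (σ x).left ((σ y).right a) = (σ y).right ((σ x).left a) :=
  (hperm x y).1 a

theorem R4' (x y : R) : obsη f x y + obsη f y x = 0 := by
  simp [obsη]

theorem etaxx (x : R) : obsη f x x = 0 := by simp [obsη]

theorem R1' (x y z t : R) :
    obsζ f y z t - obsζ f (x + y) z t + obsζ f x (y + z) t - obsζ f x y (z + t) + obsζ f x y z = 0 := by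
  simp only [obsζ, add_assoc]
  abel

include hf0l hf0r in
theorem R2' (x y z t : R) : obsζ f 0 y z = 0 ∧ obsζ f x 0 t = 0 ∧ obsζ f x y 0 = 0 := by
  refine ⟨?_, ?_, ?_⟩ <;> simp [obsζ, hf0l, hf0r]

theorem R3' (x y z : R) :
    obsζ f x y z - obsζ f x z y + obsζ f z x y - obsη f x z + obsη f (x + y) z - obsη f y z = 0 := by
  simp only [obsζ, obsη]
  rw [add_comm z y, add_comm z x]
  abel

include hone hzero hg0l hg0r hg1l hg1r in
theorem R14' (x y z : R) : obsα σ g 1 y z = 0 ∧ obsα σ g x 1 z = 0 ∧ obsα σ g x y 1 = 0 := by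
  refine ⟨?_, ?_, ?_⟩ <;>
    simp [obsα, hg1l, hg1r, l1 σ hone, r1 σ hone, left_zero, right_zero]

include hone hzero hg0l hg0r in
theorem R15' (x y z t : R) : obsα σ g 0 y z = 0 ∧ obsα σ g x 0 t = 0 ∧ obsα σ g x y 0 = 0 := by
  refine ⟨?_, ?_, ?_⟩ <;>
    simp [obsα, hg0l, hg0r, lz σ hzero, rz σ hzero, left_zero, right_zero]

include hone hzero hf0l hf0r hg0l hg0r hg1l hg1r in
theorem R16' (x y z : R) : obsl σ f g 1 y z = 0 ∧ obsl σ f g 0 y z = 0 ∧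
    obsl σ f g x 0 z = 0 ∧ obsl σ f g x y 0 = 0 := by
  refine ⟨?_, ?_, ?_, ?_⟩ <;>
    simp [obsl, hf0l, hf0r, hg0l, hg0r, hg1l, hg1r, l1 σ hone, lz σ hzero,
      left_zero]

include hone hzero hf0l hf0r hg0l hg0r hg1l hg1r in
theorem R17' (x y z : R) : obsρ σ f g x y 1 = 0 ∧ obsρ σ f g 0 y z = 0 ∧
    obsρ σ f g x 0 z = 0 ∧ obsρ σ f g x y 0 = 0 := by
  refine ⟨?_, ?_, ?_, ?_⟩ <;>
    simp [obsρ, hf0l, hf0r, hg0l, hg0r, hg1l, hg1r, r1 σ hone, rz σ hzero,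
      right_zero]

include hadd hmul hperm in
theorem R5' (x y z : R) :
    (σ x).left (obsη f y z) - obsη f (x * y) (x * z) =
      obsl σ f g x y z - obsl σ f g x z y := by
  simp only [obsη, obsl, left_sub]
  rw [add_comm z y]
  abel

include hadd hmul hperm in
theorem R6' (x y z : R) :
    (σ z).right (obsη f x y) - obsη f (x * z) (y * z) =
      obsρ σ f g x y z - obsρ σ f g y x z := by
  simp only [obsη, obsρ, right_sub]
  rw [add_comm y x]
  abel

include hadd hmul hperm in
theorem R7' (x y z t : R) :
    (σ x).left (obsζ f y z t) - obsζ f (x * y) (x * z) (x * t) =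
      obsl σ f g x z t - obsl σ f g x (y + z) t + obsl σ f g x y (z + t) -
        obsl σ f g x y z := by
  simp only [obsζ, obsl, left_sub, Bimul.left_add, mul_add, add_assoc]
  abel

include hadd hmul hperm in
theorem R8' (x y z t : R) :
    (σ t).right (obsζ f x y z) - obsζ f (x * t) (y * t) (z * t) =
      obsρ σ f g y z t - obsρ σ f g (x + y) z t + obsρ σ f g x (y + z) t -
        obsρ σ f g x y t := by
  simp only [obsζ, obsρ, right_sub, Bimul.right_add, add_mul, add_assoc]
  abel

include hadd hmul hperm in
theorem R9' (x y z t : R) :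
    obsρ σ f g x y (z + t) - obsρ σ f g x y z - obsρ σ f g x y t + obsl σ f g x z t +
        obsl σ f g y z t - obsl σ f g (x + y) z t =
      -obsζ f (x * z + x * t) (y * z) (y * t) + obsζ f (x * z) (x * t) (y * z) -
        obsη f (x * t) (y * z) + obsζ f (x * z + y * z) (x * t) (y * t) -
        obsζ f (x * z) (y * z) (x * t) := by
  simp only [obsζ, obsη, obsρ, obsl, la σ f hadd, ra σ f hadd,
    left_sub, right_sub, Bimul.left_add, Bimul.right_add, pl σ hperm,
    mul_add, add_mul, mul_sub, sub_mul, mul_assoc, add_assoc]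
  abel

include hadd hmul hperm in
theorem R10' (x y z t : R) :
    obsα σ g x y (z + t) - obsα σ g x y z - obsα σ g x y t =
      (σ x).left (obsl σ f g y z t) + obsl σ f g x (y * z) (y * t) -
        obsl σ f g (x * y) z t := by
  simp only [obsα, obsl, la σ f hadd, ra σ f hadd, lm σ g hmul, rm σ g hmul,
    left_sub, right_sub, Bimul.left_add, Bimul.right_add, pl σ hperm,
    mul_add, add_mul, mul_sub, sub_mul, mul_assoc, add_assoc]
  abel

include hadd hmul hperm in
theorem R11' (x y z t : R) :
    obsα σ g x (y + z) t - obsα σ g x y t - obsα σ g x z t =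
      (σ x).left (obsρ σ f g y z t) - obsρ σ f g (x * y) (x * z) t +
        obsl σ f g x (y * t) (z * t) - (σ t).right (obsl σ f g x y z) := by
  simp only [obsα, obsl, obsρ, la σ f hadd, ra σ f hadd, lm σ g hmul, rm σ g hmul,
    left_sub, right_sub, Bimul.left_add, Bimul.right_add, pl σ hperm,
    mul_add, add_mul, mul_sub, sub_mul, mul_assoc, add_assoc]
  abel

include hadd hmul hperm in
theorem R12' (x y z t : R) :
    obsα σ g (x + y) z t - obsα σ g x z t - obsα σ g y z t =
      -(σ t).right (obsρ σ f g x y z) - obsρ σ f g (x * z) (y * z) t +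
        obsρ σ f g x y (z * t) := by
  simp only [obsα, obsρ, la σ f hadd, ra σ f hadd, lm σ g hmul, rm σ g hmul,
    left_sub, right_sub, Bimul.left_add, Bimul.right_add, left_neg, right_neg,
    pl σ hperm, mul_add, add_mul, mul_sub, sub_mul, mul_assoc, add_assoc]
  abel

include hadd hmul hperm in
theorem R13' (x y z t : R) :
    (σ x).left (obsα σ g y z t) - obsα σ g (x * y) z t + obsα σ g x (y * z) t -
      obsα σ g x y (z * t) + (σ t).right (obsα σ g x y z) = 0 := by
  simp only [obsα, la σ f hadd, ra σ f hadd, lm σ g hmul, rm σ g hmul,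
    left_sub, right_sub, Bimul.left_add, Bimul.right_add, pl σ hperm,
    mul_add, add_mul, mul_sub, sub_mul, mul_assoc, add_assoc]
  abel

end Rel

end Pointwise

end ObsAux
theorem obstruction_is_ann_structure (R A : Type*) [Ring R] [NonUnitalRing A]
    (σ : R → Bimul A) (f g : R → R → A)
    (hzero : σ 0 = 0) (hone : σ 1 = 1)
    (hperm : ∀ x y : R, Bimul.Permutable (σ x) (σ y))
    (hf0 : ∀ x : R, f x 0 = 0 ∧ f 0 x = 0)
    (hg0 : ∀ x : R, g x 0 = 0 ∧ g 0 x = 0)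
    (hg1 : ∀ x : R, g x 1 = 0 ∧ g 1 x = 0)
    (hadd : ∀ x y : R, σ (x + y) - σ x - σ y = Bimul.inner (f x y))
    (hmul : ∀ x y : R, σ (x * y) - σ x * σ y = Bimul.inner (g x y)) :
    (∀ x y z : R,
      obsζ f x y z ∈ bicenter A ∧
      obsη f x y ∈ bicenter A ∧
      obsα σ g x y z ∈ bicenter A ∧
      obsl σ f g x y z ∈ bicenter A ∧
      obsρ σ f g x y z ∈ bicenter A) ∧
    (∀ x : R, obsη f x x = 0) ∧
    AnnRelations (fun x c => (σ x).left c) (fun c x => (σ x).right c)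
      (obsζ f) (obsη f) (obsα σ g) (obsl σ f g) (obsρ σ f g) := by
  obtain ⟨hf0l, hf0r⟩ : (∀ x : R, f x 0 = 0) ∧ (∀ x : R, f 0 x = 0) :=
    ⟨fun x => (hf0 x).1, fun x => (hf0 x).2⟩
  obtain ⟨hg0l, hg0r⟩ : (∀ x : R, g x 0 = 0) ∧ (∀ x : R, g 0 x = 0) :=
    ⟨fun x => (hg0 x).1, fun x => (hg0 x).2⟩
  obtain ⟨hg1l, hg1r⟩ : (∀ x : R, g x 1 = 0) ∧ (∀ x : R, g 1 x = 0) :=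
    ⟨fun x => (hg1 x).1, fun x => (hg1 x).2⟩
  refine ⟨fun x y z => ⟨ObsAux.zeta_mem σ f hadd x y z, ObsAux.eta_mem σ f hadd x y,
      ObsAux.alpha_mem σ g hmul x y z, ObsAux.lam_mem σ f g hadd hmul x y z,
      ObsAux.rho_mem σ f g hadd hmul x y z⟩,
    fun x => ObsAux.etaxx f x, ?_⟩
  unfold AnnRelations
  exact ⟨ObsAux.R1' f, ObsAux.R2' f hf0l hf0r, ObsAux.R3' f, ObsAux.R4' f,
    ObsAux.R5' σ f g hperm hadd hmul, ObsAux.R6' σ f g hperm hadd hmul,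
    ObsAux.R7' σ f g hperm hadd hmul, ObsAux.R8' σ f g hperm hadd hmul,
    ObsAux.R9' σ f g hperm hadd hmul, ObsAux.R10' σ f g hperm hadd hmul,
    ObsAux.R11' σ f g hperm hadd hmul, ObsAux.R12' σ f g hperm hadd hmul,
    ObsAux.R13' σ f g hperm hadd hmul,
    ObsAux.R14' σ g hzero hone hg0l hg0r hg1l hg1r,
    ObsAux.R15' σ g hzero hone hg0l hg0r,
    ObsAux.R16' σ f g hzero hone hf0l hf0r hg0l hg0r hg1l hg1r,
    ObsAux.R17' σ f g hzero hone hf0l hf0r hg0l hg0r hg1l hg1r⟩
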